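/- arXiv:1402.6574 — 2 statements merged into one kernel-verified Lean document; each statement's English description precedes it below -/
import Mathlib

section
/- The power divergence family d_λ(p,q) = (1/(λ(λ+1)))·Σ_i (p_i^{λ+1}/q_i^λ − p_i) converges, as λ → 0, to the Kullback-Leibler divergence Σ_i p_i·log(p_i/q_i), for strictly positive vectors p, q with equal total mass. -/
open Filter Topology

theorem power_divergence_tendsto_kullback
    {ι : Type*} [Fintype ι]
    (p q : ι → ℝ) (hp : ∀ i, 0 < p i) (hq : ∀ i, 0 < q i)
    (hmass : ∑ i, p i = ∑ i, q i) :
    Tendsto (fun l : ℝ =>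
        (1 / (l * (l + 1))) * ∑ i, (p i ^ (l + 1) * q i ^ (-l) - p i))
      (𝓝[({0, -1} : Set ℝ)ᶜ] 0)
      (𝓝 (∑ i, p i * Real.log (p i / q i))) := by
  set c : ι → ℝ := fun i => Real.log (p i / q i) with hc
  have hfilter : 𝓝[({0, -1} : Set ℝ)ᶜ] (0:ℝ) ≤ 𝓝[≠] (0:ℝ) := by
    apply nhdsWithin_mono
    intro x hx
    simp only [Set.mem_compl_iff, Set.mem_insert_iff, Set.mem_singleton_iff, not_or] at hx
    exact hx.1
  -- slope limit
  have key : ∀ i, Tendsto (fun l : ℝ => (Real.exp (c i * l) - 1) / l)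
      (𝓝[≠] (0:ℝ)) (𝓝 (c i)) := by
    intro i
    have h : HasDerivAt (fun l : ℝ => Real.exp (c i * l)) (c i) 0 := by
      have := (Real.hasDerivAt_exp (c i * 0)).comp 0 ((hasDerivAt_id (0:ℝ)).const_mul (c i))
      simp at this
      exact this
    have h2 := hasDerivAt_iff_tendsto_slope.mp h
    refine h2.congr (fun l => ?_)
    simp [slope_def_field, div_eq_inv_mul]
  -- limit of the model function
  have hg : Tendsto (fun l : ℝ => (1 / (l + 1)) *
      ∑ i, p i * ((Real.exp (c i * l) - 1) / l))
      (𝓝[({0, -1} : Set ℝ)ᶜ] 0) (𝓝 (∑ i, p i * c i)) := by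
    have h1 : Tendsto (fun l : ℝ => 1 / (l + 1)) (𝓝[({0, -1} : Set ℝ)ᶜ] 0) (𝓝 1) := by
      have : Tendsto (fun l : ℝ => 1 / (l + 1)) (𝓝 0) (𝓝 (1 / (0 + 1))) := by
        apply Tendsto.div tendsto_const_nhds (tendsto_id.add tendsto_const_nhds)
        norm_num
      simpa using this.mono_left nhdsWithin_le_nhds
    have h2 : Tendsto (fun l : ℝ => ∑ i, p i * ((Real.exp (c i * l) - 1) / l))
        (𝓝[({0, -1} : Set ℝ)ᶜ] 0) (𝓝 (∑ i, p i * c i)) := by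
      apply tendsto_finset_sum
      intro i _
      exact (tendsto_const_nhds.mul ((key i).mono_left hfilter))
    simpa using h1.mul h2
  refine hg.congr' ?_
  filter_upwards [eventually_mem_nhdsWithin] with l hl
  simp only [Set.mem_compl_iff, Set.mem_insert_iff, Set.mem_singleton_iff, not_or] at hl
  obtain ⟨hl0, hl1⟩ := hl
  have hrw : ∀ i, p i ^ (l + 1) * q i ^ (-l) - p i
      = p i * (Real.exp (c i * l) - 1) := by
    intro i
    have hp' := hp i
    have hq' := hq i
    have hci : c i = Real.log (p i) - Real.log (q i) := Real.log_div hp'.ne' hq'.ne'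
    rw [Real.rpow_def_of_pos hp', Real.rpow_def_of_pos hq', hci]
    rw [← Real.exp_add, show Real.log (p i) * (l + 1) + Real.log (q i) * (-l)
        = Real.log (p i) + (Real.log (p i) - Real.log (q i)) * l by ring,
      Real.exp_add, Real.exp_log hp']
    ring
  calc (1 / (l + 1)) * ∑ i, p i * ((Real.exp (c i * l) - 1) / l)
      = (1 / (l * (l + 1))) * ∑ i, p i * (Real.exp (c i * l) - 1) := by
        rw [Finset.mul_sum, Finset.mul_sum]
        apply Finset.sum_congr rfl
        intro i _
        field_simp
    _ = (1 / (l * (l + 1))) * ∑ i, (p i ^ (l + 1) * q i ^ (-l) - p i) := by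
        congr 1
        exact Finset.sum_congr rfl fun i _ => (hrw i).symm
end

section
/- The power divergence family d_λ(p,q) = (1/(λ(λ+1)))·Σ_i (p_i^{λ+1}/q_i^λ − p_i) converges, as λ → −1, to the reversed Kullback-Leibler divergence Σ_i q_i·log(q_i/p_i), for strictly positive vectors p, q with equal total mass. -/
open Filter Topology

theorem power_divergence_tendsto_reversed_kullback
    {ι : Type*} [Fintype ι]
    (p q : ι → ℝ) (hp : ∀ i, 0 < p i) (hq : ∀ i, 0 < q i)
    (hmass : ∑ i, p i = ∑ i, q i) :
    Tendsto (fun l : ℝ =>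
        (1 / (l * (l + 1))) * ∑ i, (p i ^ (l + 1) * q i ^ (-l) - p i))
      (𝓝[({0, -1} : Set ℝ)ᶜ] (-1))
      (𝓝 (∑ i, q i * Real.log (q i / p i))) := by
  set g : ℝ → ℝ := fun l => ∑ i, (p i ^ (l + 1) * q i ^ (-l) - p i) with hgdef
  have hg0 : g (-1) = 0 := by
    have : ∀ i ∈ Finset.univ, p i ^ ((-1 : ℝ) + 1) * q i ^ (-(-1 : ℝ)) - p i = q i - p i := by
      intro i _
      rw [neg_neg, neg_add_cancel, Real.rpow_zero, Real.rpow_one, one_mul]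
    simp only [hgdef]
    rw [Finset.sum_congr rfl this, Finset.sum_sub_distrib, hmass, sub_self]
  have hderiv : HasDerivAt g (-(∑ i, q i * Real.log (q i / p i))) (-1) := by
    have h : HasDerivAt g (∑ i, -(q i * Real.log (q i / p i))) (-1) := by
      apply HasDerivAt.fun_sum
      intro i _
      have hpi := hp i
      have hqi := hq i
      have h1 : HasDerivAt (fun l : ℝ => p i ^ (l + 1)) (Real.log (p i)) (-1) := by
        have := ((Real.hasStrictDerivAt_const_rpow hpi ((-1 : ℝ) + 1)).hasDerivAt).comp
          (-1 : ℝ) ((hasDerivAt_id (-1 : ℝ)).add_const 1)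
        simpa [Function.comp_def, Real.rpow_zero] using this
      have h2 : HasDerivAt (fun l : ℝ => q i ^ (-l)) (-(q i * Real.log (q i))) (-1) := by
        have := ((Real.hasStrictDerivAt_const_rpow hqi (-(-1 : ℝ))).hasDerivAt).comp
          (-1 : ℝ) ((hasDerivAt_id (-1 : ℝ)).neg)
        simpa [Function.comp_def, Real.rpow_one] using this
      have h3 := (h1.fun_mul h2).sub_const (p i)
      convert h3 using 1
      rw [neg_neg, Real.rpow_one, neg_add_cancel, Real.rpow_zero, one_mul,
        Real.log_div hqi.ne' hpi.ne']
      ring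
    simpa [Finset.sum_neg_distrib] using h
  have hslope := hasDerivAt_iff_tendsto_slope.mp hderiv
  have hsub : (({0, -1} : Set ℝ)ᶜ) ⊆ {(-1 : ℝ)}ᶜ := by
    intro x hx
    simp only [Set.mem_compl_iff, Set.mem_insert_iff, Set.mem_singleton_iff, not_or] at hx ⊢
    simpa [one_div] using hx.2
  have hslope' : Tendsto (slope g (-1)) (𝓝[({0, -1} : Set ℝ)ᶜ] (-1))
      (𝓝 (-(∑ i, q i * Real.log (q i / p i)))) :=
    hslope.mono_left (nhdsWithin_mono _ hsub)
  have hinv : Tendsto (fun l : ℝ => 1 / l) (𝓝[({0, -1} : Set ℝ)ᶜ] (-1)) (𝓝 (-1)) := by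
    have hc : ContinuousAt (fun l : ℝ => 1 / l) (-1) :=
      ContinuousAt.div continuousAt_const continuousAt_id (by norm_num)
    have h := hc.tendsto.mono_left (nhdsWithin_le_nhds (s := ({0, -1} : Set ℝ)ᶜ))
    norm_num at h
    simpa [one_div] using h
  have hmul := hinv.mul hslope'
  have hval : (-1 : ℝ) * -(∑ i, q i * Real.log (q i / p i)) = ∑ i, q i * Real.log (q i / p i) := by
    ring
  rw [hval] at hmul
  refine hmul.congr' ?_
  filter_upwards [self_mem_nhdsWithin] with l hl
  simp only [Set.mem_compl_iff, Set.mem_insert_iff, Set.mem_singleton_iff, not_or] at hl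
  obtain ⟨hl0, hl1⟩ := hl
  have hl1' : l + 1 ≠ 0 := by
    intro h; apply hl1; linarith
  rw [slope_def_field, hg0, sub_zero, sub_neg_eq_add, div_mul_div_comm, one_mul, one_div,
    ← div_eq_inv_mul]
end
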